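/- arXiv:2401.09026 — 3 statements merged into one kernel-verified Lean document; each statement's English description precedes it below -/
import Mathlib

section
/- Let C ⊆ ℝⁿ be a nonempty closed convex set. If C is approximately M-decomposable, then dom σ_C is closed and σ_C is continuous relative to dom σ_C. -/
open scoped InnerProductSpace Pointwise ENNReal
open Metric Filter
open scoped Topology

/-- The support function `σ_C(d) = sup_{x ∈ C} ⟪d, x⟫` of a set `C ⊆ ℝⁿ`,
with values in the extended reals. -/
noncomputable def suppFun {n : ℕ} (C : Set (EuclideanSpace ℝ (Fin n)))
    (d : EuclideanSpace ℝ (Fin n)) : EReal :=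
  ⨆ x ∈ C, ((⟪d, x⟫_ℝ : ℝ) : EReal)

/-- The effective domain `dom σ_C = {d : σ_C(d) < +∞}` of the support function. -/
def suppDom {n : ℕ} (C : Set (EuclideanSpace ℝ (Fin n))) :
    Set (EuclideanSpace ℝ (Fin n)) :=
  {d | suppFun C d < ⊤}

/-- The recession cone `rec C` of a set `C`. -/
def recCone {n : ℕ} (C : Set (EuclideanSpace ℝ (Fin n))) :
    Set (EuclideanSpace ℝ (Fin n)) :=
  {y | ∀ x ∈ C, ∀ t : ℝ, 0 ≤ t → x + t • y ∈ C}

/-- The truncation `C_r = (C ∩ rB) + rec C` of `C` of radius `r`. -/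
def trunc {n : ℕ} (C : Set (EuclideanSpace ℝ (Fin n))) (r : ℝ) :
    Set (EuclideanSpace ℝ (Fin n)) :=
  (C ∩ closedBall 0 r) + recCone C

/-- `C` is approximately M-decomposable: for every `ε > 0` there is `r > 0`
with `C ⊆ C_r + εB`. -/
def ApproxMDecomposable {n : ℕ} (C : Set (EuclideanSpace ℝ (Fin n))) : Prop :=
  ∀ ε > (0 : ℝ), ∃ r > (0 : ℝ), C ⊆ trunc C r + closedBall 0 ε

/-- `C` is M-decomposable: `C = M + rec C` for some compact convex `M`. -/
def MDecomposable {n : ℕ} (C : Set (EuclideanSpace ℝ (Fin n))) : Prop :=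
  ∃ M : Set (EuclideanSpace ℝ (Fin n)), IsCompact M ∧ Convex ℝ M ∧ C = M + recCone C

/-- `C` is hyperbolic: `C ⊆ M + rec C` for some compact convex `M`. -/
def Hyperbolic {n : ℕ} (C : Set (EuclideanSpace ℝ (Fin n))) : Prop :=
  ∃ M : Set (EuclideanSpace ℝ (Fin n)), IsCompact M ∧ Convex ℝ M ∧ C ⊆ M + recCone C

/-- The polar cone `K° = {d : ⟪d, x⟫ ≤ 0 for all x ∈ K}` of a cone `K`. -/
def polarCone {n : ℕ} (K : Set (EuclideanSpace ℝ (Fin n))) :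
    Set (EuclideanSpace ℝ (Fin n)) :=
  {d | ∀ x ∈ K, ⟪d, x⟫_ℝ ≤ 0}

lemma inner_le_suppFun {n : ℕ} (C : Set (EuclideanSpace ℝ (Fin n))) (d x : EuclideanSpace ℝ (Fin n))
    (hx : x ∈ C) : ((⟪d, x⟫_ℝ : ℝ) : EReal) ≤ suppFun C d :=
  le_iSup₂ (f := fun x (_ : x ∈ C) => ((⟪d, x⟫_ℝ : ℝ) : EReal)) x hx

lemma suppFun_le {n : ℕ} (C : Set (EuclideanSpace ℝ (Fin n))) (d : EuclideanSpace ℝ (Fin n))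
    (a : EReal) (ha : ∀ x ∈ C, ((⟪d, x⟫_ℝ : ℝ) : EReal) ≤ a) : suppFun C d ≤ a :=
  iSup₂_le ha

lemma suppFun_ne_bot {n : ℕ} (C : Set (EuclideanSpace ℝ (Fin n))) (hne : C.Nonempty)
    (d : EuclideanSpace ℝ (Fin n)) : suppFun C d ≠ ⊥ := by
  obtain ⟨x₀, hx₀⟩ := hne
  exact fun hb => absurd (hb ▸ inner_le_suppFun C d x₀ hx₀) (by simp)

lemma suppDom_subset_polar {n : ℕ} {C : Set (EuclideanSpace ℝ (Fin n))} (hne : C.Nonempty)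
    {d : EuclideanSpace ℝ (Fin n)} (hd : d ∈ suppDom C) : d ∈ polarCone (recCone C) := by
  intro y hy
  by_contra hpos
  push_neg at hpos
  obtain ⟨x₀, hx₀⟩ := hne
  set a : ℝ := (suppFun C d).toReal with ha_def
  have ha : ((a : ℝ) : EReal) = suppFun C d :=
    EReal.coe_toReal (ne_of_lt hd) (suppFun_ne_bot C ⟨x₀, hx₀⟩ d)
  set t : ℝ := (a - ⟪d, x₀⟫_ℝ + 1) / ⟪d, y⟫_ℝ with ht_def
  have hax₀ : ⟪d, x₀⟫_ℝ ≤ a := by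
    have := inner_le_suppFun C d x₀ hx₀
    rw [← ha] at this
    exact EReal.coe_le_coe_iff.1 this
  have ht : 0 ≤ t := div_nonneg (by linarith) (le_of_lt hpos)
  have hmem : x₀ + t • y ∈ C := hy x₀ hx₀ t ht
  have hle : ⟪d, x₀ + t • y⟫_ℝ ≤ a := by
    have := inner_le_suppFun C d _ hmem
    rw [← ha] at this
    exact EReal.coe_le_coe_iff.1 this
  rw [inner_add_right, real_inner_smul_right] at hle
  rw [ht_def, div_mul_cancel₀ _ (ne_of_gt hpos)] at hle
  linarith

lemma key_bound {n : ℕ} {C : Set (EuclideanSpace ℝ (Fin n))} {r ε a : ℝ}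
    {d d₀ : EuclideanSpace ℝ (Fin n)}
    (hsub : C ⊆ trunc C r + closedBall 0 ε)
    (hd : d ∈ polarCone (recCone C))
    (ha : ∀ m ∈ C, ⟪d₀, m⟫_ℝ ≤ a)
    {x : EuclideanSpace ℝ (Fin n)} (hx : x ∈ C) :
    ⟪d, x⟫_ℝ ≤ a + ‖d - d₀‖ * r + ‖d‖ * ε := by
  obtain ⟨u, hu, v, hv, rfl⟩ := Set.mem_add.1 (hsub hx)
  obtain ⟨m, hm, y, hy, rfl⟩ := Set.mem_add.1 hu
  have hmC : m ∈ C := hm.1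
  have hmr : ‖m‖ ≤ r := mem_closedBall_zero_iff.1 hm.2
  have hvε : ‖v‖ ≤ ε := mem_closedBall_zero_iff.1 hv
  have h1 : ⟪d, y⟫_ℝ ≤ 0 := hd y hy
  have h2 : ⟪d, v⟫_ℝ ≤ ‖d‖ * ε := by
    calc ⟪d, v⟫_ℝ ≤ ‖d‖ * ‖v‖ := real_inner_le_norm d v
    _ ≤ ‖d‖ * ε := by nlinarith [norm_nonneg d]
  have h3 : ⟪d, m⟫_ℝ ≤ a + ‖d - d₀‖ * r := by
    have : ⟪d - d₀, m⟫_ℝ ≤ ‖d - d₀‖ * r := by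
      calc ⟪d - d₀, m⟫_ℝ ≤ ‖d - d₀‖ * ‖m‖ := real_inner_le_norm _ _
      _ ≤ ‖d - d₀‖ * r := by nlinarith [norm_nonneg (d - d₀)]
    have hsplit : ⟪d, m⟫_ℝ = ⟪d₀, m⟫_ℝ + ⟪d - d₀, m⟫_ℝ := by
      rw [inner_sub_left]; ring
    have := ha m hmC
    linarith
  have hsplit : ⟪d, m + y + v⟫_ℝ = ⟪d, m⟫_ℝ + ⟪d, y⟫_ℝ + ⟪d, v⟫_ℝ := by
    rw [inner_add_right, inner_add_right]
  linarith

lemma suppDom_eq_polar {n : ℕ} {C : Set (EuclideanSpace ℝ (Fin n))} (hne : C.Nonempty)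
    (h : ApproxMDecomposable C) : suppDom C = polarCone (recCone C) := by
  ext d
  constructor
  · exact fun hd => suppDom_subset_polar hne hd
  · intro hd
    obtain ⟨r, hr, hsub⟩ := h 1 one_pos
    have hbound : ∀ x ∈ C, ⟪d, x⟫_ℝ ≤ ‖d - 0‖ * r + ‖d‖ * 1 := by
      intro x hx
      have := key_bound (d₀ := 0) (a := 0) hsub hd (fun m _ => by simp) hx
      linarith
    have : suppFun C d ≤ ((‖d - 0‖ * r + ‖d‖ * 1 : ℝ) : EReal) :=
      suppFun_le C d _ (fun x hx => EReal.coe_le_coe_iff.2 (hbound x hx))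
    exact lt_of_le_of_lt this (EReal.coe_lt_top _)

/-- if `C` is approximately M-decomposable, then `dom σ_C` is closed
and `σ_C` is continuous relative to `dom σ_C`. -/
theorem approxMDecomposable_imp_suppDom_closed_and_continuousOn {n : ℕ}
    (C : Set (EuclideanSpace ℝ (Fin n)))
    (hne : C.Nonempty) (hcl : IsClosed C) (hconv : Convex ℝ C)
    (h : ApproxMDecomposable C) :
    IsClosed (suppDom C) ∧ ContinuousOn (suppFun C) (suppDom C) := by
  have hdom : suppDom C = polarCone (recCone C) := suppDom_eq_polar hne h
  constructor
  · rw [hdom]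
    have : polarCone (recCone C) = ⋂ x ∈ recCone C, {d : EuclideanSpace ℝ (Fin n) | ⟪d, x⟫_ℝ ≤ 0} := by
      ext d; simp [polarCone, Set.mem_iInter]
    rw [this]
    exact isClosed_biInter fun x _ =>
      isClosed_le (continuous_id.inner continuous_const) continuous_const
  · intro d₀ hd₀
    have hfin_top : suppFun C d₀ ≠ ⊤ := ne_of_lt hd₀
    have hfin_bot : suppFun C d₀ ≠ ⊥ := suppFun_ne_bot C hne d₀
    set a : ℝ := (suppFun C d₀).toReal with ha_def
    have ha : ((a : ℝ) : EReal) = suppFun C d₀ := EReal.coe_toReal hfin_top hfin_bot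
    rw [ContinuousWithinAt]
    rw [tendsto_order]
    constructor
    · -- lower bound
      intro b hb
      have : b < suppFun C d₀ := hb.trans_eq rfl
      simp only [suppFun, lt_iSup_iff] at this
      obtain ⟨x, hx, hbx⟩ := this
      have hcont : Tendsto (fun d => ((⟪d, x⟫_ℝ : ℝ) : EReal)) (𝓝[suppDom C] d₀)
          (𝓝 ((⟪d₀, x⟫_ℝ : ℝ) : EReal)) :=
        ((continuous_coe_real_ereal.comp (continuous_id.inner continuous_const)).tendsto d₀).mono_left
          nhdsWithin_le_nhds
      filter_upwards [hcont.eventually (eventually_gt_nhds hbx)] with d hd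
      exact lt_of_lt_of_le hd (inner_le_suppFun C d x hx)
    · -- upper bound
      intro b hb
      rcases eq_or_ne b ⊤ with rfl | hbt
      · filter_upwards [self_mem_nhdsWithin] with d hd
        exact hd
      · have hbb : ((a : ℝ) : EReal) < b := by rw [ha]; exact hb
        lift b to ℝ using ⟨hbt, ((EReal.bot_lt_coe a).trans hbb).ne'⟩
        have hab : a < b := EReal.coe_lt_coe_iff.1 hbb
        set δ : ℝ := b - a with hδ_def
        have hδ : 0 < δ := by linarith
        set ε : ℝ := δ / (2 * (‖d₀‖ + 2)) with hε_def
        have hεpos : 0 < ε := by positivity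
        obtain ⟨r, hr, hsub⟩ := h ε hεpos
        set ρ : ℝ := min 1 (δ / (2 * r)) with hρ_def
        have hρpos : 0 < ρ := lt_min one_pos (by positivity)
        have hmemC : ∀ m ∈ C, ⟪d₀, m⟫_ℝ ≤ a := by
          intro m hm
          have := inner_le_suppFun C d₀ m hm
          rw [← ha] at this
          exact EReal.coe_le_coe_iff.1 this
        have hball : ∀ᶠ d in 𝓝[suppDom C] d₀, dist d d₀ < ρ :=
          eventually_nhdsWithin_of_eventually_nhds
            (Metric.eventually_nhds_iff.2 ⟨ρ, hρpos, fun {d} hd => hd⟩)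
        filter_upwards [self_mem_nhdsWithin, hball] with d hdmem hdd
        have hdpolar : d ∈ polarCone (recCone C) := hdom ▸ hdmem
        have hnorm : ‖d - d₀‖ < ρ := by rwa [← dist_eq_norm]
        have hbound : ∀ x ∈ C, ⟪d, x⟫_ℝ ≤ a + ‖d - d₀‖ * r + ‖d‖ * ε :=
          fun x hx => key_bound hsub hdpolar hmemC hx
        have hc : a + ‖d - d₀‖ * r + ‖d‖ * ε < b := by
          have h1 : ‖d - d₀‖ * r < δ / 2 := by
            have : ‖d - d₀‖ < δ / (2 * r) := lt_of_lt_of_le hnorm (min_le_right _ _)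
            calc ‖d - d₀‖ * r < (δ / (2 * r)) * r := by
                  exact mul_lt_mul_of_pos_right this hr
            _ = δ / 2 := by field_simp
          have h2 : ‖d‖ * ε < δ / 2 := by
            have hd1 : ‖d‖ < ‖d₀‖ + 1 := by
              have : ‖d - d₀‖ < 1 := lt_of_lt_of_le hnorm (min_le_left _ _)
              have := norm_sub_norm_le d d₀
              linarith
            have : ‖d‖ * ε < (‖d₀‖ + 1) * ε := mul_lt_mul_of_pos_right hd1 hεpos
            have h3 : (‖d₀‖ + 1) * ε < δ / 2 := by
              rw [hε_def, ← mul_div_assoc,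
                div_lt_div_iff₀ (by positivity) (by norm_num : (0:ℝ) < 2)]
              nlinarith [norm_nonneg d₀]
            linarith
          linarith
        calc suppFun C d ≤ ((a + ‖d - d₀‖ * r + ‖d‖ * ε : ℝ) : EReal) :=
              suppFun_le C d _ (fun x hx => EReal.coe_le_coe_iff.2 (hbound x hx))
        _ < (b : EReal) := EReal.coe_lt_coe_iff.2 hc
end

section
/- Let C ⊆ ℝⁿ be a nonempty closed convex set and r > 0 be such that the truncation C_r is nonempty. Then C_r is M-decomposable with compact component C ∩ rB, i.e. C_r is closed and convex, C ∩ rB is compact and convex, and C_r = (C ∩ rB) + rec C_r with rec C_r = rec C. -/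
open scoped InnerProductSpace Pointwise ENNReal
open Metric Filter

section aux
variable {n : ℕ} {C : Set (EuclideanSpace ℝ (Fin n))}

lemma recCone_isClosed (hcl : IsClosed C) : IsClosed (recCone C) := by
  have : recCone C = ⋂ x ∈ C, ⋂ t ∈ Set.Ici (0:ℝ), (fun y => x + t • y) ⁻¹' C := by
    ext y
    simp [recCone, Set.mem_iInter]
  rw [this]
  refine isClosed_biInter fun x hx => isClosed_biInter fun t ht => ?_
  exact hcl.preimage (continuous_const.add (continuous_id.const_smul t))

lemma recCone_convex (hconv : Convex ℝ C) : Convex ℝ (recCone C) := by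
  intro y hy z hz a b ha hb hab
  intro x hx t ht
  have heq : x + t • (a • y + b • z) = a • (x + t • y) + b • (x + t • z) := by
    have : x + t • (a • y + b • z) = (a + b) • x + t • (a • y + b • z) := by
      rw [hab, one_smul]
    rw [this]; module
  rw [heq]
  exact hconv (hy x hx t ht) (hz x hx t ht) ha hb hab

lemma recCone_add_mem {y z : EuclideanSpace ℝ (Fin n)}
    (hy : y ∈ recCone C) (hz : z ∈ recCone C) : y + z ∈ recCone C := by
  intro x hx t ht
  have : x + t • (y + z) = (x + t • y) + t • z := by module
  rw [this]
  exact hz _ (hy x hx t ht) t ht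

lemma recCone_smul_mem {y : EuclideanSpace ℝ (Fin n)} {s : ℝ}
    (hy : y ∈ recCone C) (hs : 0 ≤ s) : s • y ∈ recCone C := by
  intro x hx t ht
  have : x + t • s • y = x + (t * s) • y := by module
  rw [this]
  exact hy x hx _ (mul_nonneg ht hs)

/-- base-point independence: if from one point of a closed convex set the ray
stays in the set, then `y` is in the recession cone. -/
lemma mem_recCone_of_ray (hcl : IsClosed C) (hconv : Convex ℝ C)
    {x₀ y : EuclideanSpace ℝ (Fin n)} (_hx₀ : x₀ ∈ C)
    (hray : ∀ t : ℝ, 0 ≤ t → x₀ + t • y ∈ C) : y ∈ recCone C := by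
  intro x hx t ht
  rcases eq_or_lt_of_le ht with h0 | htpos
  · simpa [← h0] using hx
  -- approximate x + t y by convex combinations
  have htend : Tendsto (fun k : ℕ => x + ((t / k) • (x₀ - x) + t • y)) atTop
      (nhds (x + t • y)) := by
    have h0 : Tendsto (fun k : ℕ => (t / k : ℝ)) atTop (nhds 0) :=
      tendsto_const_div_atTop_nhds_zero_nat t
    have := ((h0.smul_const (x₀ - x)).add_const (t • y)).const_add x
    simpa using this
  refine hcl.mem_of_tendsto htend ?_
  filter_upwards [eventually_ge_atTop (⌈t⌉₊ + 1)] with k hk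
  have hk1 : (1 : ℕ) ≤ k := le_trans (Nat.le_add_left 1 _) hk
  have hkpos : (0 : ℝ) < (k : ℝ) := by exact_mod_cast hk1
  have htk : t ≤ (k : ℝ) := by
    calc t ≤ (⌈t⌉₊ : ℝ) := Nat.le_ceil t
    _ ≤ (k : ℝ) := by exact_mod_cast le_trans (Nat.le_succ _) hk
  set a : ℝ := t / k with ha
  have ha0 : 0 ≤ a := div_nonneg ht hkpos.le
  have ha1 : a ≤ 1 := (div_le_one hkpos).2 htk
  have hak : a * (k : ℝ) = t := div_mul_cancel₀ t hkpos.ne'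
  have hmem : (1 - a) • x + a • (x₀ + (k : ℝ) • y) ∈ C :=
    hconv hx (hray k hkpos.le) (by linarith) ha0 (by ring)
  have heq : (1 - a) • x + a • (x₀ + (k : ℝ) • y)
      = x + (a • (x₀ - x) + (a * (k : ℝ)) • y) := by module
  rw [heq, hak] at hmem
  exact hmem

lemma trunc_subset {r : ℝ} : trunc C r ⊆ C := by
  rintro p ⟨m, ⟨hm, -⟩, u, hu, rfl⟩
  simpa using hu m hm 1 zero_le_one

end aux

/-- a nonempty truncation `C_r` is M-decomposable with compact
component `C ∩ rB`. -/
theorem trunc_MDecomposable {n : ℕ} (C : Set (EuclideanSpace ℝ (Fin n)))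
    (hne : C.Nonempty) (hcl : IsClosed C) (hconv : Convex ℝ C)
    (r : ℝ) (hr : 0 < r) (hner : (trunc C r).Nonempty) :
    IsClosed (trunc C r) ∧ Convex ℝ (trunc C r) ∧
    IsCompact (C ∩ closedBall 0 r) ∧ Convex ℝ (C ∩ closedBall 0 r) ∧
    recCone (trunc C r) = recCone C ∧
    trunc C r = (C ∩ closedBall 0 r) + recCone (trunc C r) := by
  have hMcpt : IsCompact (C ∩ closedBall 0 r) :=
    (isCompact_closedBall (0 : EuclideanSpace ℝ (Fin n)) r).inter_left hcl
  have hMconv : Convex ℝ (C ∩ closedBall 0 r) :=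
    hconv.inter (convex_closedBall 0 r)
  have htcl : IsClosed (trunc C r) :=
    IsClosed.add_left_of_isCompact (recCone_isClosed hcl) hMcpt
  have htconv : Convex ℝ (trunc C r) := hMconv.add (recCone_convex hconv)
  have hsub : trunc C r ⊆ C := trunc_subset
  have hrec : recCone (trunc C r) = recCone C := by
    apply Set.Subset.antisymm
    · -- rec trunc ⊆ rec C
      intro y hy
      obtain ⟨p, hp⟩ := hner
      have hray : ∀ t : ℝ, 0 ≤ t → p + t • y ∈ C := fun t ht =>
        hsub (hy p hp t ht)
      exact mem_recCone_of_ray hcl hconv (hsub hp) hray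
    · -- rec C ⊆ rec trunc
      intro y hy
      rintro p ⟨m, hm, u, hu, rfl⟩ t ht
      refine ⟨m, hm, u + t • y, recCone_add_mem hu (recCone_smul_mem hy ht), ?_⟩
      module
  refine ⟨htcl, htconv, hMcpt, hMconv, hrec, ?_⟩
  rw [hrec]; rfl
end

section
/- Let C² = {x ∈ ℝ² : x₂ ≥ x₁²} and define C = (C² × {0}) + cl cone(C² × {1}) ⊆ ℝ³, where cl cone denotes the closure of the cone generated by a set. Then C is a nonempty closed convex set with rec C = cl cone(C² × {1}), C is hyperbolic (indeed C ⊆ {(0,0,−1)} + rec C), but C is not approximately M-decomposable. -/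
open scoped InnerProductSpace Pointwise ENNReal
open Metric Filter

/-- The cone generated by a set: `cone A = {λa : λ ≥ 0, a ∈ A}`. -/
def coneOf {n : ℕ} (A : Set (EuclideanSpace ℝ (Fin n))) :
    Set (EuclideanSpace ℝ (Fin n)) :=
  {y | ∃ t : ℝ, 0 ≤ t ∧ ∃ a ∈ A, y = t • a}

/-- `C² × {0} ⊆ ℝ³`, where `C² = {x ∈ ℝ² : x₂ ≥ x₁²}`. -/
def parabolaBase : Set (EuclideanSpace ℝ (Fin 3)) :=
  {x | (x 0) ^ 2 ≤ x 1 ∧ x 2 = 0}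

/-- `C² × {1} ⊆ ℝ³`, where `C² = {x ∈ ℝ² : x₂ ≥ x₁²}`. -/
def parabolaLift : Set (EuclideanSpace ℝ (Fin 3)) :=
  {x | (x 0) ^ 2 ≤ x 1 ∧ x 2 = 1}

/-- The set `C = (C² × {0}) + cl cone(C² × {1}) ⊆ ℝ³`. -/
def exampleSet : Set (EuclideanSpace ℝ (Fin 3)) :=
  parabolaBase + closure (coneOf parabolaLift)

/-- The point `d = (0, 0, −1)ᵀ ∈ ℝ³`. -/
noncomputable def dpt : EuclideanSpace ℝ (Fin 3) :=
  (WithLp.equiv 2 (Fin 3 → ℝ)).symm ![0, 0, -1]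



noncomputable def mk3 (a b c : ℝ) : EuclideanSpace ℝ (Fin 3) :=
  (WithLp.equiv 2 (Fin 3 → ℝ)).symm ![a, b, c]

@[simp] lemma mk3_apply0 (a b c : ℝ) : mk3 a b c 0 = a := rfl
@[simp] lemma mk3_apply1 (a b c : ℝ) : mk3 a b c 1 = b := rfl
@[simp] lemma mk3_apply2 (a b c : ℝ) : mk3 a b c 2 = c := rfl

def Kset : Set (EuclideanSpace ℝ (Fin 3)) :=
  {x | 0 ≤ x 1 ∧ 0 ≤ x 2 ∧ (x 0) ^ 2 ≤ x 1 * x 2}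

def Dset : Set (EuclideanSpace ℝ (Fin 3)) :=
  {x | 0 ≤ x 2 ∧ (x 0) ^ 2 ≤ x 1 * (1 + x 2)}

lemma soc_add {x1 y1 z1 x2 y2 z2 c1 c2 : ℝ} (h1 : x1^2 ≤ y1*z1) (h2 : x2^2 ≤ y2*z2)
    (hy1 : 0 ≤ y1) (hz1 : 0 ≤ z1) (hy2 : 0 ≤ y2) (hz2 : 0 ≤ z2) (hc1 : 0 ≤ c1) (hc2 : 0 ≤ c2) :
    (c1*x1 + c2*x2)^2 ≤ (c1*y1 + c2*y2) * (c1*z1 + c2*z2) := by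
  have hT : 2*(x1*x2) ≤ y1*z2 + y2*z1 := by
    rcases le_or_gt (x1*x2) 0 with h | h
    · nlinarith [mul_nonneg hy1 hz2, mul_nonneg hy2 hz1]
    · nlinarith [sq_nonneg (y1*z2 - y2*z1), mul_nonneg hy1 hz2, mul_nonneg hy2 hz1,
        mul_le_mul h1 h2 (sq_nonneg x2) (mul_nonneg hy1 hz1)]
  nlinarith [mul_nonneg (mul_nonneg hc1 hc1) (sub_nonneg.2 h1),
    mul_nonneg (mul_nonneg hc2 hc2) (sub_nonneg.2 h2),
    mul_nonneg (mul_nonneg hc1 hc2) (sub_nonneg.2 hT)]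

lemma abs_coord_le_norm (x : EuclideanSpace ℝ (Fin 3)) (i : Fin 3) : |x i| ≤ ‖x‖ := by
  have h : (x i)^2 ≤ ‖x‖^2 := by
    rw [EuclideanSpace.norm_eq, Real.sq_sqrt (by positivity)]
    have := Finset.single_le_sum (f := fun j => ‖x j‖^2)
      (fun j _ => by positivity) (Finset.mem_univ i)
    simpa [sq_abs] using this
  have := Real.sqrt_le_sqrt h
  rwa [Real.sqrt_sq_eq_abs, Real.sqrt_sq (norm_nonneg x)] at this

lemma continuous_coord (i : Fin 3) :
    Continuous fun x : EuclideanSpace ℝ (Fin 3) => x i :=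
  (EuclideanSpace.proj i).continuous

lemma Dset_y_nonneg {x : EuclideanSpace ℝ (Fin 3)} (hx : x ∈ Dset) : 0 ≤ x 1 := by
  obtain ⟨h1, h2⟩ := hx
  nlinarith [sq_nonneg (x 0)]

lemma mem_cone_of_pos {x : EuclideanSpace ℝ (Fin 3)} (hx : x ∈ Kset) (h2 : 0 < x 2) :
    x ∈ coneOf parabolaLift := by
  obtain ⟨hy, hz, hxyz⟩ := hx
  refine ⟨x 2, h2.le, (x 2)⁻¹ • x, ⟨?_, ?_⟩, ?_⟩
  · show ((x 2)⁻¹ • x : EuclideanSpace ℝ (Fin 3)) 0 ^ 2 ≤ ((x 2)⁻¹ • x : EuclideanSpace ℝ (Fin 3)) 1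
    simp only [PiLp.smul_apply, smul_eq_mul]
    calc ((x 2)⁻¹ * x 0)^2 = (x 2)⁻¹^2 * (x 0)^2 := by ring
      _ ≤ (x 2)⁻¹^2 * (x 1 * x 2) := by
          exact mul_le_mul_of_nonneg_left hxyz (by positivity)
      _ = (x 2)⁻¹ * x 1 * ((x 2)⁻¹ * x 2) := by ring
      _ = (x 2)⁻¹ * x 1 := by rw [inv_mul_cancel₀ h2.ne', mul_one]
  · show ((x 2)⁻¹ • x : EuclideanSpace ℝ (Fin 3)) 2 = 1
    simp only [PiLp.smul_apply, smul_eq_mul]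
    exact inv_mul_cancel₀ h2.ne'
  · rw [smul_smul, mul_inv_cancel₀ h2.ne', one_smul]

lemma closure_cone_eq : closure (coneOf parabolaLift) = Kset := by
  have hKclosed : IsClosed Kset := by
    have : Kset = {x : EuclideanSpace ℝ (Fin 3) | 0 ≤ x 1} ∩ {x | 0 ≤ x 2}
        ∩ {x | (x 0)^2 ≤ x 1 * x 2} := by
      ext x; simp [Kset, and_assoc]
    rw [this]
    exact ((isClosed_le continuous_const (continuous_coord 1)).inter
      (isClosed_le continuous_const (continuous_coord 2))).inter
      (isClosed_le ((continuous_coord 0).pow 2) ((continuous_coord 1).mul (continuous_coord 2)))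
  apply le_antisymm
  · apply closure_minimal _ hKclosed
    rintro y ⟨t, ht, a, ⟨ha1, ha2⟩, rfl⟩
    refine ⟨?_, ?_, ?_⟩ <;> simp only [PiLp.smul_apply, smul_eq_mul, ha2]
    · nlinarith [sq_nonneg (a 0)]
    · simpa using ht
    · nlinarith [mul_nonneg (mul_nonneg ht ht) (sub_nonneg.2 ha1), sq_nonneg (a 0)]
  · intro x hx
    rcases lt_or_eq_of_le hx.2.1 with h2 | h2
    · exact subset_closure (mem_cone_of_pos hx h2)
    · -- x 2 = 0, hence x 0 = 0
      have hx0 : x 0 = 0 := by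
        have := hx.2.2
        rw [← h2] at this
        nlinarith [sq_nonneg (x 0)]
      have s0 : (EuclideanSpace.single 2 (1:ℝ) : EuclideanSpace ℝ (Fin 3)) 0 = 0 := by
        simp [EuclideanSpace.single_apply]
      have s1 : (EuclideanSpace.single 2 (1:ℝ) : EuclideanSpace ℝ (Fin 3)) 1 = 0 := by
        simp [EuclideanSpace.single_apply]
      have s2 : (EuclideanSpace.single 2 (1:ℝ) : EuclideanSpace ℝ (Fin 3)) 2 = 1 := by
        simp [EuclideanSpace.single_apply]
      have hmem : ∀ n : ℕ, x + (1/(n+1:ℝ)) • EuclideanSpace.single 2 (1:ℝ)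
          ∈ coneOf parabolaLift := by
        intro n
        have hpos : (0:ℝ) < 1/(n+1:ℝ) := by positivity
        apply mem_cone_of_pos
        · refine ⟨?_, ?_, ?_⟩ <;>
            simp only [PiLp.add_apply, PiLp.smul_apply, smul_eq_mul, s0, s1, s2,
              mul_zero, add_zero, mul_one, hx0, ← h2]
          · exact hx.1
          · positivity
          · nlinarith [mul_nonneg hx.1 hpos.le]
        · show (0:ℝ) < ((x + (1/(n+1:ℝ)) • EuclideanSpace.single 2 (1:ℝ) :
              EuclideanSpace ℝ (Fin 3)) 2)
          simp only [PiLp.add_apply, PiLp.smul_apply, smul_eq_mul, s2, mul_one, ← h2]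
          positivity
      have h1 : Filter.Tendsto (fun n : ℕ => x + (1/(n+1:ℝ)) • EuclideanSpace.single 2 (1:ℝ))
          atTop (nhds (x + (0:ℝ) • EuclideanSpace.single 2 (1:ℝ))) :=
        tendsto_const_nhds.add (tendsto_one_div_add_atTop_nhds_zero_nat.smul_const _)
      rw [zero_smul, add_zero] at h1
      exact mem_closure_of_tendsto h1 (Filter.Eventually.of_forall hmem)

lemma exampleSet_eq : exampleSet = Dset := by
  unfold exampleSet
  rw [closure_cone_eq]
  ext q
  constructor
  · intro hq
    obtain ⟨p, hp, k, hk, rfl⟩ := Set.mem_add.1 hq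
    have hp1 : 0 ≤ p 1 := le_trans (sq_nonneg _) hp.1
    constructor
    · simp only [Set.mem_setOf_eq, PiLp.add_apply, hp.2]
      have := hk.2.1; linarith
    · have h := soc_add (x1 := p 0) (y1 := p 1) (z1 := 1) (x2 := k 0) (y2 := k 1) (z2 := k 2)
        (c1 := 1) (c2 := 1) (by simpa using hp.1) hk.2.2 hp1 zero_le_one hk.1 hk.2.1
        zero_le_one zero_le_one
      simp only [one_mul] at h
      simp only [Set.mem_setOf_eq, PiLp.add_apply, hp.2]
      nlinarith [h]
  · intro hq
    obtain ⟨hz, hxy⟩ := hq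
    set a : ℝ := q 0 / (1 + q 2) with ha
    have hs : (0:ℝ) < 1 + q 2 := by linarith
    have ht : a * (1 + q 2) = q 0 := div_mul_cancel₀ _ hs.ne'
    have ht2 : a^2 * (1 + q 2)^2 = (q 0)^2 := by rw [← ht]; ring
    have hy : a^2 * (1 + q 2) ≤ q 1 := by nlinarith [ht2, hxy, hs]
    have hy' : a^2 ≤ q 1 := by nlinarith [hy, sq_nonneg a, hz]
    refine Set.mem_add.2 ⟨mk3 a (a^2) 0, ⟨by simp [parabolaBase], by simp [parabolaBase]⟩,
      q - mk3 a (a^2) 0, ⟨?_, ?_, ?_⟩, by abel⟩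
    · simp only [PiLp.sub_apply, mk3_apply1]
      linarith
    · simp only [PiLp.sub_apply, mk3_apply2]
      linarith
    · simp only [PiLp.sub_apply, mk3_apply0, mk3_apply1, mk3_apply2, sub_zero]
      nlinarith [ht, hy, hz, mul_nonneg hz (sub_nonneg.2 hy)]

lemma convex_Dset : Convex ℝ Dset := by
  intro x hx y hy a b ha hb hab
  obtain ⟨hx2, hx0⟩ := hx
  obtain ⟨hy2, hy0⟩ := hy
  have hx1 : 0 ≤ x 1 := Dset_y_nonneg ⟨hx2, hx0⟩
  have hy1 : 0 ≤ y 1 := Dset_y_nonneg ⟨hy2, hy0⟩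
  constructor
  · simp only [Set.mem_setOf_eq, PiLp.add_apply, PiLp.smul_apply, smul_eq_mul]
    positivity
  · simp only [Set.mem_setOf_eq, PiLp.add_apply, PiLp.smul_apply, smul_eq_mul]
    have h := soc_add (x1 := x 0) (y1 := x 1) (z1 := 1 + x 2)
      (x2 := y 0) (y2 := y 1) (z2 := 1 + y 2) (c1 := a) (c2 := b)
      hx0 hy0 hx1 (by linarith) hy1 (by linarith) ha hb
    have heq : a * (1 + x 2) + b * (1 + y 2) = 1 + (a * x 2 + b * y 2) := by
      have : a + b = 1 := hab
      ring_nf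
      linarith
    rw [heq] at h
    exact h

lemma recCone_Dset : recCone Dset = Kset := by
  ext d
  constructor
  · intro hd
    have h0 : (0 : EuclideanSpace ℝ (Fin 3)) ∈ Dset := by
      constructor <;> simp [Dset]
    have hspec : ∀ t : ℝ, 0 ≤ t → (t * d 2 ≥ 0 ∧ (t * d 0)^2 ≤ (t * d 1) * (1 + t * d 2)) := by
      intro t ht
      have := hd 0 h0 t ht
      obtain ⟨h1, h2⟩ := this
      simp only [Set.mem_setOf_eq, PiLp.add_apply, PiLp.smul_apply, smul_eq_mul,
        PiLp.zero_apply, zero_add] at h1 h2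
      exact ⟨h1, h2⟩
    have h1 := hspec 1 zero_le_one
    simp only [one_mul] at h1
    have hd2 : 0 ≤ d 2 := h1.1
    have hd1 : 0 ≤ d 1 := by nlinarith [h1.2, sq_nonneg (d 0), hd2]
    refine ⟨hd1, hd2, ?_⟩
    by_contra hc
    push_neg at hc
    set c : ℝ := (d 0)^2 - d 1 * d 2 with hcdef
    have hcpos : 0 < c := by simp only [hcdef]; linarith
    set t : ℝ := (d 1 + 1) / c with htdef
    have htpos : 0 < t := div_pos (by linarith) hcpos
    have hsp := (hspec t htpos.le).2
    have htc : t * c = d 1 + 1 := div_mul_cancel₀ _ hcpos.ne'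
    have htc2 : t * t * c = (d 1 + 1) * t := by rw [mul_comm t t, mul_assoc, htc]; ring
    simp only [hcdef] at htc2
    nlinarith [hsp, htc2, htpos]
  · intro hd x hx t ht
    obtain ⟨hd1, hd2, hd0⟩ := hd
    have hx1 : 0 ≤ x 1 := Dset_y_nonneg hx
    constructor
    · simp only [Set.mem_setOf_eq, PiLp.add_apply, PiLp.smul_apply, smul_eq_mul]
      have := mul_nonneg ht hd2
      have := hx.1
      linarith
    · simp only [Set.mem_setOf_eq, PiLp.add_apply, PiLp.smul_apply, smul_eq_mul]
      have h := soc_add (x1 := x 0) (y1 := x 1) (z1 := 1 + x 2)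
        (x2 := d 0) (y2 := d 1) (z2 := d 2) (c1 := 1) (c2 := t)
        hx.2 hd0 hx1 (by linarith [hx.1]) hd1 hd2 zero_le_one ht
      nlinarith [h]

lemma recCone_exampleSet : recCone exampleSet = Kset := by
  rw [exampleSet_eq, recCone_Dset]

lemma subset_dpt_add : exampleSet ⊆ {dpt} + recCone exampleSet := by
  intro q hq
  rw [exampleSet_eq] at hq
  refine Set.mem_add.2 ⟨dpt, rfl, q - dpt, ?_, by abel⟩
  rw [recCone_exampleSet]
  have hd0 : dpt 0 = 0 := by simp [dpt]
  have hd1 : dpt 1 = 0 := by simp [dpt]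
  have hd2 : dpt 2 = -1 := by simp [dpt]
  refine ⟨?_, ?_, ?_⟩ <;> simp only [PiLp.sub_apply, hd0, hd1, hd2, sub_zero, sub_neg_eq_add]
  · exact Dset_y_nonneg hq
  · linarith [hq.1]
  · nlinarith [hq.2]


lemma isClosed_Dset : IsClosed Dset := by
  have h : Dset = {x : EuclideanSpace ℝ (Fin 3) | 0 ≤ x 2}
      ∩ {x | (x 0)^2 ≤ x 1 * (1 + x 2)} := by ext x; simp [Dset]
  rw [h]
  exact (isClosed_le continuous_const (continuous_coord 2)).inter
    (isClosed_le ((continuous_coord 0).pow 2)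
      ((continuous_coord 1).mul (continuous_const.add (continuous_coord 2))))


set_option maxHeartbeats 1000000 in
lemma not_approx : ¬ ApproxMDecomposable exampleSet := by
  intro h
  obtain ⟨r, hr, hsub⟩ := h (1/2) (by norm_num)
  set t : ℝ := 4 * (r + 1) with htdef
  have hp : mk3 t (t^2) 0 ∈ exampleSet := by
    rw [exampleSet_eq]
    constructor <;> simp [Dset]
  obtain ⟨u, hu, v, hv, huv⟩ := Set.mem_add.1 (hsub hp)
  unfold trunc at hu
  obtain ⟨c, hc, k, hk, hck⟩ := Set.mem_add.1 hu
  rw [recCone_exampleSet] at hk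
  obtain ⟨hcC, hcball⟩ := hc
  rw [exampleSet_eq] at hcC
  have hcnorm : ‖c‖ ≤ r := mem_closedBall_zero_iff.1 hcball
  have hvnorm : ‖v‖ ≤ 1/2 := mem_closedBall_zero_iff.1 hv
  have hcoord : ∀ i : Fin 3, c i + k i + v i = mk3 t (t^2) 0 i := by
    intro i
    have : (c + k + v) i = mk3 t (t^2) 0 i := by rw [hck, huv]
    simpa [PiLp.add_apply] using this
  have hc0 := hcoord 0; have hc1 := hcoord 1; have hc2 := hcoord 2
  simp only [mk3_apply0, mk3_apply1, mk3_apply2] at hc0 hc1 hc2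
  have hcb : ∀ i : Fin 3, |c i| ≤ r := fun i => le_trans (abs_coord_le_norm c i) hcnorm
  have hvb : ∀ i : Fin 3, |v i| ≤ 1/2 := fun i => le_trans (abs_coord_le_norm v i) hvnorm
  have hc1nn : 0 ≤ c 1 := Dset_y_nonneg hcC
  have hc2nn : 0 ≤ c 2 := hcC.1
  obtain ⟨hk1, hk2, hk0⟩ := hk
  have hb0 := abs_le.1 (hcb 0)
  have hb0v := abs_le.1 (hvb 0)
  have hb1v := abs_le.1 (hvb 1)
  have hb2v := abs_le.1 (hvb 2)
  -- k 2 ≤ 1/2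
  have hkk2 : k 2 ≤ 1/2 := by linarith
  have hkk1 : k 1 ≤ t^2 + 1/2 := by linarith
  have hkk0 : t - r - 1/2 ≤ k 0 := by linarith
  have hkpos : 0 < t - r - 1/2 := by nlinarith
  nlinarith [hk0, mul_le_mul hkk1 hkk2 hk2 (by nlinarith : (0:ℝ) ≤ t^2 + 1/2),
    mul_self_le_mul_self hkpos.le hkk0, hr]

/-- `C = (C² × {0}) + cl cone(C² × {1})` is a nonempty closed
convex set with `rec C = cl cone(C² × {1})`, it is hyperbolic (indeed
`C ⊆ {(0,0,−1)} + rec C`), but not approximately M-decomposable. -/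
theorem exampleSet_hyperbolic_not_approxMDecomposable :
    exampleSet.Nonempty ∧ IsClosed exampleSet ∧ Convex ℝ exampleSet ∧
    recCone exampleSet = closure (coneOf parabolaLift) ∧
    exampleSet ⊆ {dpt} + recCone exampleSet ∧
    Hyperbolic exampleSet ∧
    ¬ ApproxMDecomposable exampleSet := by
  refine ⟨⟨0, ?_⟩, ?_, ?_, ?_, subset_dpt_add,
    ⟨{dpt}, isCompact_singleton, convex_singleton _, subset_dpt_add⟩, not_approx⟩
  · rw [exampleSet_eq]
    refine ⟨by simp, by simp⟩
  · rw [exampleSet_eq]; exact isClosed_Dset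
  · rw [exampleSet_eq]; exact convex_Dset
  · rw [recCone_exampleSet, closure_cone_eq]
end
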